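/- For every family of bijections (α_k)_{k∈ℕ} as in the definition of 3SATC, the Boolean function family 3SATC = (3SATC_n)_{n∈ℕ} belongs to PLSIS. -/

import Mathlib

/-- Boolean register names: `inp i` is input register `in:(i+1)`,
`aux i` is auxiliary register `aux:(i+1)`, `out` is the output register. -/
inductive Reg where
  | inp : ℕ → Reg
  | aux : ℕ → Reg
  | out : Reg
deriving DecidableEq

/-- Basic instructions: register reads/writes, and (for splitting instruction
sequences) `split p` and `reply p` for Boolean parameters `p`. -/
inductive BInstr where
  | get : Reg → BInstr
  | set : Reg → Bool → BInstr
  | split : ℕ → BInstr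
  | reply : ℕ → BInstr
deriving DecidableEq

/-- Primitive instructions. -/
inductive PInstr where
  | plain : BInstr → PInstr
  | pos : BInstr → PInstr
  | neg : BInstr → PInstr
  | jump : ℕ → PInstr
  | halt : PInstr
deriving DecidableEq

abbrev RegState := Reg → Bool

/-- State change caused by processing a basic instruction. -/
def BInstr.effect : BInstr → RegState → RegState
  | .set r b, s => Function.update s r b
  | _, s => s

/-- Reply produced by processing a basic instruction. -/
def BInstr.rpl : BInstr → RegState → Bool
  | .get r, s => s r
  | .set _ b, _ => b
  | _, _ => false

def BInstr.isSplitReply : BInstr → Bool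
  | .split _ => true
  | .reply _ => true
  | _ => false

/-- Single-thread execution of an instruction sequence on Boolean registers;
`none` means deadlock, `some s` means termination in register state `s`.
(`split`/`reply` instructions make no sense here and deadlock.) -/
def exec : List PInstr → RegState → Option RegState
  | [], _ => none
  | .plain a :: X, s =>
      if a.isSplitReply then none else exec X (a.effect s)
  | .pos a :: X, s =>
      if a.isSplitReply then none
      else if a.rpl s then exec X (a.effect s) else exec (X.drop 1) (a.effect s)
  | .neg a :: X, s =>
      if a.isSplitReply then none
      else if a.rpl s then exec (X.drop 1) (a.effect s) else exec X (a.effect s)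
  | .jump 0 :: _, _ => none
  | .jump (l+1) :: X, s => exec (X.drop l) s
  | .halt :: _, s => some s
termination_by X _ => X.length
decreasing_by all_goals (simp only [List.length_drop, List.length_cons]; omega)

/-- Initial register state: input registers `in:1 .. in:n` contain
`b 0, ..., b (n-1)`; all other registers contain `false`. -/
def initState (n : ℕ) (b : Fin n → Bool) : RegState := fun r =>
  match r with
  | .inp i => if h : i < n then b ⟨i, h⟩ else false
  | _ => false

/-- `X` computes the `n`-ary Boolean function `f`: for every input, execution
terminates (does not deadlock) with the output register containing `f b`. -/
def Computes {n : ℕ} (f : (Fin n → Bool) → Bool) (X : List PInstr) : Prop :=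
  ∀ b : Fin n → Bool, ∃ s : RegState,
    exec X (initState n b) = some s ∧ s Reg.out = f b

/-- Basic instructions allowed in `IS_br`. -/
def BrBasic : BInstr → Prop
  | .get (.inp _) => True
  | .get (.aux _) => True
  | .set (.aux _) _ => True
  | .set .out _ => True
  | _ => False

/-- Basic instructions allowed in `IS_br^na`. -/
def NaBasic : BInstr → Prop
  | .get (.inp _) => True
  | .set .out _ => True
  | _ => False

def InstrBasicOK (P : BInstr → Prop) : PInstr → Prop
  | .plain a => P a
  | .pos a => P a
  | .neg a => P a
  | _ => True

/-- Membership of `IS_br` (non-empty, only allowed basic instructions). -/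
def ISbr (X : List PInstr) : Prop :=
  X ≠ [] ∧ ∀ u ∈ X, InstrBasicOK BrBasic u

/-- Membership of `IS_br^na`. -/
def ISbrna (X : List PInstr) : Prop :=
  X ≠ [] ∧ ∀ u ∈ X, InstrBasicOK NaBasic u

/-- The primitive instruction contains the basic instruction `out.set:false`. -/
def UsesOutSetFalse : PInstr → Prop
  | .plain (.set .out false) => True
  | .pos (.set .out false) => True
  | .neg (.set .out false) => True
  | _ => False

/-- The class PLIS of Boolean function families computable by
polynomial-length instruction sequences from `IS_br`. -/
def PLIS (F : (n : ℕ) → (Fin n → Bool) → Bool) : Prop :=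
  ∃ h : Polynomial ℕ, ∀ n : ℕ, ∃ X : List PInstr,
    ISbr X ∧ Computes (F n) X ∧ X.length ≤ h.eval n

/-- Basic instructions allowed in `SIS_br`. -/
def SisBasic : BInstr → Prop
  | .get (.inp _) => True
  | .set .out true => True
  | .split _ => True
  | .reply _ => True
  | _ => False

/-- Membership of `SIS_br`. -/
def SISbr (X : List PInstr) : Prop :=
  X ≠ [] ∧ ∀ u ∈ X, InstrBasicOK SisBasic u

/-- A (partial) instantiation of the Boolean parameters. -/
abbrev PEnv := ℕ → Option Bool

/-- Fueled cyclic-interleaving execution of a vector of threads (each a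
remaining instruction sequence with a parameter instantiation) sharing the
Boolean registers.  `none` means deadlock (or not enough fuel), `some s`
means successful termination of all threads in register state `s`. -/
def sexec : ℕ → List (List PInstr × PEnv) → RegState → Option RegState
  | 0, _, _ => none
  | _ + 1, [], s => some s
  | fuel + 1, (is, ρ) :: ts, s =>
    match is with
    | [] => none
    | .halt :: _ => sexec fuel ts s
    | .jump 0 :: _ => none
    | .jump (l+1) :: X => sexec fuel ((X.drop l, ρ) :: ts) s
    | .plain a :: X =>
      match a with
      | .split p =>
        match ρ p with
        | some _ => none
        | none => sexec fuel
            (ts ++ [(X, Function.update ρ p (some true)),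
                    (X, Function.update ρ p (some false))]) s
      | .reply p =>
        match ρ p with
        | none => none
        | some _ => sexec fuel (ts ++ [(X, ρ)]) s
      | _ => sexec fuel (ts ++ [(X, ρ)]) (a.effect s)
    | .pos a :: X =>
      match a with
      | .split p =>
        match ρ p with
        | some _ => none
        | none => sexec fuel
            (ts ++ [(X, Function.update ρ p (some true)),
                    (X.drop 1, Function.update ρ p (some false))]) s
      | .reply p =>
        match ρ p with
        | none => none
        | some b => sexec fuel (ts ++ [(if b then X else X.drop 1, ρ)]) s
      | _ => sexec fuel (ts ++ [(if a.rpl s then X else X.drop 1, ρ)]) (a.effect s)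
    | .neg a :: X =>
      match a with
      | .split p =>
        match ρ p with
        | some _ => none
        | none => sexec fuel
            (ts ++ [(X.drop 1, Function.update ρ p (some true)),
                    (X, Function.update ρ p (some false))]) s
      | .reply p =>
        match ρ p with
        | none => none
        | some b => sexec fuel (ts ++ [(if b then X.drop 1 else X, ρ)]) s
      | _ => sexec fuel (ts ++ [(if a.rpl s then X.drop 1 else X, ρ)]) (a.effect s)

/-- `X` splitting computes the `n`-ary Boolean function `f`. -/
def SplittingComputes {n : ℕ} (f : (Fin n → Bool) → Bool) (X : List PInstr) : Prop :=
  ∀ b : Fin n → Bool, ∃ (fuel : ℕ) (s : RegState),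
    sexec fuel [(X, fun _ => none)] (initState n b) = some s ∧ s Reg.out = f b

/-- The class PLSIS of Boolean function families splitting computable by
polynomial-length instruction sequences from `SIS_br`. -/
def PLSIS (F : (n : ℕ) → (Fin n → Bool) → Bool) : Prop :=
  ∃ h : Polynomial ℕ, ∀ n : ℕ, ∃ X : List PInstr,
    SISbr X ∧ SplittingComputes (F n) X ∧ X.length ≤ h.eval n

/-- `ndisj k` = C(2k,1) + C(2k,2) + C(2k,3), the number of non-empty sets of
at most 3 literals over the variables `v_1, ..., v_k`. -/
def ndisj (k : ℕ) : ℕ :=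
  Nat.choose (2*k) 1 + Nat.choose (2*k) 2 + Nat.choose (2*k) 3

/-- A literal is a pair (variable index, polarity): `(i, true)` is `v_i` and
`(i, false)` is `¬ v_i`.  `LitSetOK k L` says `L` is a non-empty set of at
most 3 literals over `v_1, ..., v_k`. -/
def LitSetOK (k : ℕ) (L : Finset (ℕ × Bool)) : Prop :=
  L.Nonempty ∧ L.card ≤ 3 ∧ ∀ p ∈ L, 1 ≤ p.1 ∧ p.1 ≤ k

/-- A family of bijections `α_k` from `[1, ndisj k]` to the non-empty sets of
at most 3 literals over `v_1, ..., v_k`, compatible in the sense that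
`α_{i+1}` extends `α_i`. -/
structure AlphaFamily where
  α : ℕ → ℕ → Finset (ℕ × Bool)
  maps : ∀ k i, 1 ≤ i → i ≤ ndisj k → LitSetOK k (α k i)
  inj : ∀ k i j, 1 ≤ i → i ≤ ndisj k → 1 ≤ j → j ≤ ndisj k → α k i = α k j → i = j
  surj : ∀ k L, LitSetOK k L → ∃ i, 1 ≤ i ∧ i ≤ ndisj k ∧ α k i = L
  compat : ∀ i j, 1 ≤ j → j ≤ ndisj i → α (i+1) j = α i j

/-- The largest `k` with `ndisj k ≤ n`. -/
def kOf (n : ℕ) : ℕ := Nat.findGreatest (fun k => ndisj k ≤ n) n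

/-- `3SATC_n (b_1, ..., b_n)` is `true` iff the conjunction, over all
`i ∈ [1, ndisj (kOf n)]` with `b_i = true`, of the disjunction of the
literals in `α_{kOf n} (i)` is satisfiable (here `b i` for `i : Fin n` is
`b_{i+1}`; an assignment `σ` satisfies a literal `(j, c)` iff `σ j = c`). -/
noncomputable def threeSATC (A : AlphaFamily) (n : ℕ) (b : Fin n → Bool) : Bool :=
  @decide
    (∃ σ : ℕ → Bool, ∀ i : Fin n, i.1 + 1 ≤ ndisj (kOf n) → b i = true →
      ∃ p ∈ A.α (kOf n) (i.1 + 1), σ p.1 = p.2)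
    (Classical.propDecidable _)


namespace Statement7

/-- Deterministic run of a single thread, assuming input registers hold `ι`
and the thread only reads inputs, sets `out` to `true`, splits and replies.
Result `some v`: the thread and all its descendants terminate, and `v` records
whether any of them performs `out.set:true`. -/
def trun : ℕ → (ℕ → Bool) → List PInstr → PEnv → Option Bool
  | 0, _, _, _ => none
  | f+1, ι, is, ρ =>
    match is with
    | .halt :: _ => some false
    | .jump (l+1) :: X => trun f ι (X.drop l) ρ
    | .pos (.get (.inp i)) :: X => trun f ι (if ι i then X else X.drop 1) ρ
    | .neg (.get (.inp i)) :: X => trun f ι (if ι i then X.drop 1 else X) ρ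
    | .plain (.set .out true) :: X => (trun f ι X ρ).map (fun _ => true)
    | .pos (.reply p) :: X =>
        match ρ p with
        | some bb => trun f ι (if bb then X else X.drop 1) ρ
        | none => none
    | .neg (.reply p) :: X =>
        match ρ p with
        | some bb => trun f ι (if bb then X.drop 1 else X) ρ
        | none => none
    | .plain (.split p) :: X =>
        match ρ p with
        | some _ => none
        | none =>
          match trun f ι X (Function.update ρ p (some true)),
                trun f ι X (Function.update ρ p (some false)) with
          | some v1, some v2 => some (v1 || v2)
          | _, _ => none
    | _ => none

def nc {v : Bool} {P : Sort _} (h : (none : Option Bool) = some v) : P := by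
  cases h

theorem trun_posreply {f : ℕ} {ι : ℕ → Bool} {X : List PInstr} {ρ : PEnv} {p : ℕ} :
    trun (f+1) ι (.pos (.reply p) :: X) ρ =
      (match ρ p with
        | some bb => trun f ι (if bb then X else List.drop 1 X) ρ
        | none => none) := rfl

theorem trun_negreply {f : ℕ} {ι : ℕ → Bool} {X : List PInstr} {ρ : PEnv} {p : ℕ} :
    trun (f+1) ι (.neg (.reply p) :: X) ρ =
      (match ρ p with
        | some bb => trun f ι (if bb then List.drop 1 X else X) ρ
        | none => none) := rfl

theorem trun_split {f : ℕ} {ι : ℕ → Bool} {X : List PInstr} {ρ : PEnv} {p : ℕ} :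
    trun (f+1) ι (.plain (.split p) :: X) ρ =
      (match ρ p with
        | some _ => none
        | none =>
          match trun f ι X (Function.update ρ p (some true)),
                trun f ι X (Function.update ρ p (some false)) with
          | some v1, some v2 => some (v1 || v2)
          | _, _ => none) := rfl

theorem trun_mono {f : ℕ} {ι : ℕ → Bool} {is : List PInstr} {ρ : PEnv} {v : Bool}
    (h : trun f ι is ρ = some v) : trun (f+1) ι is ρ = some v := by
  induction f generalizing is ρ v with
  | zero => exact nc h
  | succ f ih =>
    rcases is with _ | ⟨u, X⟩
    · exact nc h
    rcases u with b | b | b | l | _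
    · -- plain
      rcases b with r | ⟨r, bb⟩ | p | p
      · exact nc h
      · rcases r with i | i | _ <;> rcases bb
        case out.true =>
          rcases Option.map_eq_some_iff.1 h with ⟨v0, hv0, hv⟩
          show (trun (f+1) ι X ρ).map (fun _ => true) = some v
          rw [ih hv0]; simp [hv]
        all_goals exact nc h
      · -- split p
        rw [trun_split] at h ⊢
        cases hp : ρ p with
        | some bb => rw [hp] at h; exact nc h
        | none =>
          rw [hp] at h
          rcases h1 : trun f ι X (Function.update ρ p (some true)) with _ | v1 <;>
            rw [h1] at h
          · exact nc h
          rcases h2 : trun f ι X (Function.update ρ p (some false)) with _ | v2 <;>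
            rw [h2] at h
          · exact nc h
          rw [ih h1, ih h2]
          exact h
      · exact nc h
    · -- pos
      rcases b with r | ⟨r, bb⟩ | p | p
      · rcases r with i | i | _
        · exact ih h
        · exact nc h
        · exact nc h
      · exact nc h
      · exact nc h
      · rw [trun_posreply] at h ⊢
        cases hp : ρ p with
        | some bb => simp only [hp] at h ⊢; exact ih h
        | none => rw [hp] at h; exact nc h
    · -- neg
      rcases b with r | ⟨r, bb⟩ | p | p
      · rcases r with i | i | _
        · exact ih h
        · exact nc h
        · exact nc h
      · exact nc h
      · exact nc h
      · rw [trun_negreply] at h ⊢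
        cases hp : ρ p with
        | some bb => simp only [hp] at h ⊢; exact ih h
        | none => rw [hp] at h; exact nc h
    · -- jump
      rcases l with _ | l
      · exact nc h
      · exact ih h
    · -- halt
      exact h

theorem trun_mono_le {f g : ℕ} {ι : ℕ → Bool} {is : List PInstr} {ρ : PEnv} {v : Bool}
    (hfg : f ≤ g) (h : trun f ι is ρ = some v) : trun g ι is ρ = some v := by
  obtain ⟨d, rfl⟩ := Nat.exists_eq_add_of_le hfg
  clear hfg
  induction d with
  | zero => exact h
  | succ d ih => exact trun_mono ih

/-- The thread `(is, ρ)` and all its descendants terminate, with overall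
out-setting flag `v`. -/
def Trun (ι : ℕ → Bool) (is : List PInstr) (ρ : PEnv) (v : Bool) : Prop :=
  ∃ f, trun f ι is ρ = some v

theorem Trun_det {ι is ρ} {v v' : Bool} (h : Trun ι is ρ v) (h' : Trun ι is ρ v') :
    v = v' := by
  obtain ⟨f, hf⟩ := h
  obtain ⟨g, hg⟩ := h'
  have h1 := trun_mono_le (Nat.le_max_left f g) hf
  have h2 := trun_mono_le (Nat.le_max_right f g) hg
  rw [h1] at h2
  exact Option.some_inj.1 h2

theorem Trun_true_iff {ι is ρ f} {v : Bool} (h : trun f ι is ρ = some v) :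
    Trun ι is ρ true ↔ v = true :=
  ⟨fun h' => (Trun_det h' ⟨f, h⟩).symm, fun hv => ⟨f, hv ▸ h⟩⟩

end Statement7

namespace Statement7

theorem sexec_nil {f : ℕ} {s : RegState} : sexec (f+1) [] s = some s := rfl

theorem sexec_halt {f : ℕ} {X : List PInstr} {ρ : PEnv} {ts} {s : RegState} :
    sexec (f+1) ((.halt :: X, ρ) :: ts) s = sexec f ts s := rfl

theorem sexec_jump {f l : ℕ} {X : List PInstr} {ρ : PEnv} {ts} {s : RegState} :
    sexec (f+1) ((.jump (l+1) :: X, ρ) :: ts) s = sexec f ((X.drop l, ρ) :: ts) s := rfl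

theorem sexec_pos_get {f : ℕ} {r : Reg} {X : List PInstr} {ρ : PEnv} {ts} {s : RegState} :
    sexec (f+1) ((.pos (.get r) :: X, ρ) :: ts) s =
      sexec f (ts ++ [(if s r then X else X.drop 1, ρ)]) s := rfl

theorem sexec_neg_get {f : ℕ} {r : Reg} {X : List PInstr} {ρ : PEnv} {ts} {s : RegState} :
    sexec (f+1) ((.neg (.get r) :: X, ρ) :: ts) s =
      sexec f (ts ++ [(if s r then X.drop 1 else X, ρ)]) s := rfl

theorem sexec_plain_set {f : ℕ} {r : Reg} {bb : Bool} {X : List PInstr} {ρ : PEnv} {ts}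
    {s : RegState} :
    sexec (f+1) ((.plain (.set r bb) :: X, ρ) :: ts) s =
      sexec f (ts ++ [(X, ρ)]) (Function.update s r bb) := rfl

theorem sexec_pos_reply {f p : ℕ} {X : List PInstr} {ρ : PEnv} {ts} {s : RegState} :
    sexec (f+1) ((.pos (.reply p) :: X, ρ) :: ts) s =
      (match ρ p with
        | none => none
        | some b => sexec f (ts ++ [(if b then X else X.drop 1, ρ)]) s) := rfl

theorem sexec_neg_reply {f p : ℕ} {X : List PInstr} {ρ : PEnv} {ts} {s : RegState} :
    sexec (f+1) ((.neg (.reply p) :: X, ρ) :: ts) s =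
      (match ρ p with
        | none => none
        | some b => sexec f (ts ++ [(if b then X.drop 1 else X, ρ)]) s) := rfl

theorem sexec_plain_split {f p : ℕ} {X : List PInstr} {ρ : PEnv} {ts} {s : RegState} :
    sexec (f+1) ((.plain (.split p) :: X, ρ) :: ts) s =
      (match ρ p with
        | some _ => none
        | none => sexec f
            (ts ++ [(X, Function.update ρ p (some true)),
                    (X, Function.update ρ p (some false))]) s) := rfl

theorem ex_cons {ι : ℕ → Bool} {l : List (List PInstr × PEnv)} {Y : List PInstr} {ρ : PEnv} :
    (∃ t ∈ (Y, ρ) :: l, Trun ι t.1 t.2 true) ↔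
      Trun ι Y ρ true ∨ ∃ t ∈ l, Trun ι t.1 t.2 true := by
  simp

theorem ex_app1 {ι : ℕ → Bool} {l : List (List PInstr × PEnv)} {Y : List PInstr} {ρ : PEnv} :
    (∃ t ∈ l ++ [(Y, ρ)], Trun ι t.1 t.2 true) ↔
      (∃ t ∈ l, Trun ι t.1 t.2 true) ∨ Trun ι Y ρ true := by
  simp [List.mem_append, or_and_right, exists_or]

theorem ex_app2 {ι : ℕ → Bool} {l : List (List PInstr × PEnv)} {Y₁ Y₂ : List PInstr}
    {ρ₁ ρ₂ : PEnv} :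
    (∃ t ∈ l ++ [(Y₁, ρ₁), (Y₂, ρ₂)], Trun ι t.1 t.2 true) ↔
      (∃ t ∈ l, Trun ι t.1 t.2 true) ∨ (Trun ι Y₁ ρ₁ true ∨ Trun ι Y₂ ρ₂ true) := by
  simp [List.mem_append, or_and_right, exists_or, or_assoc]

set_option maxHeartbeats 2000000 in
/-- Master lemma: if every thread in the vector has a terminating deterministic
run, then the cyclically interleaved execution terminates, changing only the
`out` register, which ends `true` iff it started `true` or some thread's run
sets it. -/
theorem master (ι : ℕ → Bool) :
    ∀ (N : ℕ) (fs : List ℕ) (ts : List (List PInstr × PEnv)) (s : RegState),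
      (fs.map fun f => 3 ^ f).sum ≤ N →
      List.Forall₂ (fun f t => ∃ v, trun f ι t.1 t.2 = some v) fs ts →
      (∀ i, s (Reg.inp i) = ι i) →
      ∃ fuel s', sexec fuel ts s = some s' ∧ (∀ r, r ≠ Reg.out → s' r = s r) ∧
        (s' Reg.out = true ↔ (s Reg.out = true ∨ ∃ t ∈ ts, Trun ι t.1 t.2 true)) := by
  intro N
  induction N with
  | zero =>
    intro fs ts s hsum hall hs
    cases hall with
    | nil => exact ⟨1, s, rfl, fun _ _ => rfl, by simp⟩
    | @cons f t fs' ts' hf hrest =>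
      obtain ⟨v, hv⟩ := hf
      cases f with
      | zero => exact nc hv
      | succ f₀ =>
        exfalso
        have h3 : 0 < 3 ^ (f₀+1) := pow_pos (by norm_num) _
        simp only [List.map_cons, List.sum_cons] at hsum
        omega
  | succ N ih =>
    intro fs ts s hsum hall hs
    cases hall with
    | nil => exact ⟨1, s, rfl, fun _ _ => rfl, by simp⟩
    | @cons f t fs' ts' hf hrest =>
      obtain ⟨v, hv⟩ := hf
      obtain ⟨is, ρ⟩ := t
      replace hv : trun f ι is ρ = some v := hv
      cases f with
      | zero => exact nc hv
      | succ f₀ =>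
        have hpow : (3:ℕ) ^ (f₀+1) = 3 * 3 ^ f₀ := by rw [pow_succ]; ring
        have hpos : 0 < 3 ^ f₀ := pow_pos (by norm_num) _
        simp only [List.map_cons, List.sum_cons] at hsum
        have hsum2 : (fs'.map fun f => 3 ^ f).sum + 2 * 3 ^ f₀ ≤ N := by omega
        rcases is with _ | ⟨u, X⟩
        · exact nc hv
        rcases u with b | b | b | l | _
        · -- plain
          rcases b with r | ⟨r, bb⟩ | p | p
          · exact nc hv
          · -- set r bb; only (out, true) possible
            rcases r with i | i | _ <;> rcases bb
            case out.true =>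
              rcases Option.map_eq_some_iff.1
                  (show (trun f₀ ι X ρ).map (fun _ => true) = some v from hv)
                with ⟨v0, hv0, hveq⟩
              obtain ⟨fuel, s', h1, h2, h3⟩ := ih (fs' ++ [f₀]) (ts' ++ [(X, ρ)])
                (Function.update s Reg.out true)
                (by simp only [List.map_append, List.sum_append, List.map_cons,
                      List.sum_cons, List.map_nil, List.sum_nil]; omega)
                (List.rel_append hrest (List.Forall₂.cons ⟨v0, hv0⟩ List.Forall₂.nil))
                (fun i => by
                  rw [Function.update_of_ne (by simp : Reg.inp i ≠ Reg.out)]; exact hs i)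
              refine ⟨fuel + 1, s', ?_, ?_, ?_⟩
              · rw [sexec_plain_set]; exact h1
              · intro r hr
                rw [h2 r hr, Function.update_of_ne hr]
              · rw [h3]
                have hout : Function.update s Reg.out true Reg.out = true :=
                  Function.update_self _ _ _
                rw [hout]
                have hh : Trun ι (PInstr.plain (.set .out true) :: X) ρ true :=
                  ⟨f₀ + 1, by rw [← hveq] at hv; exact hv⟩
                rw [ex_cons]
                simp [hh]
            all_goals exact nc hv
          · -- split p
            rw [trun_split] at hv
            cases hp : ρ p with
            | some bb => rw [hp] at hv; exact nc hv
            | none =>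
              rw [hp] at hv
              rcases h1 : trun f₀ ι X (Function.update ρ p (some true)) with _ | v1 <;>
                rw [h1] at hv
              · exact nc hv
              rcases h2 : trun f₀ ι X (Function.update ρ p (some false)) with _ | v2 <;>
                rw [h2] at hv
              · exact nc hv
              have hveq : v = (v1 || v2) := (Option.some_inj.1 hv).symm
              obtain ⟨fuel, s', hh1, hh2, hh3⟩ := ih (fs' ++ [f₀, f₀])
                (ts' ++ [(X, Function.update ρ p (some true)),
                         (X, Function.update ρ p (some false))]) s
                (by simp only [List.map_append, List.sum_append, List.map_cons,
                      List.sum_cons, List.map_nil, List.sum_nil]; omega)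
                (List.rel_append hrest
                  (List.Forall₂.cons ⟨v1, h1⟩ (List.Forall₂.cons ⟨v2, h2⟩ List.Forall₂.nil)))
                hs
              refine ⟨fuel + 1, s', ?_, hh2, ?_⟩
              · rw [sexec_plain_split, hp]; exact hh1
              · rw [hh3]
                have e0 : Trun ι (PInstr.plain (.split p) :: X) ρ true ↔ v = true :=
                  Trun_true_iff (f := f₀ + 1) (by rw [trun_split, hp, h1, h2, hv])
                have e1 : Trun ι X (Function.update ρ p (some true)) true ↔ v1 = true :=
                  Trun_true_iff h1
                have e2 : Trun ι X (Function.update ρ p (some false)) true ↔ v2 = true :=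
                  Trun_true_iff h2
                refine or_congr Iff.rfl ?_
                rw [ex_app2, ex_cons, e1, e2, e0, hveq]
                simp only [Bool.or_eq_true]
                exact or_comm
          · exact nc hv
        · -- pos
          rcases b with r | ⟨r, bb⟩ | p | p
          · rcases r with i | i | _
            · -- pos get inp i
              have hv' : trun f₀ ι (if ι i then X else X.drop 1) ρ = some v := hv
              obtain ⟨fuel, s', h1, h2, h3⟩ := ih (fs' ++ [f₀])
                (ts' ++ [(if ι i then X else X.drop 1, ρ)]) s
                (by simp only [List.map_append, List.sum_append, List.map_cons,
                      List.sum_cons, List.map_nil, List.sum_nil]; omega)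
                (List.rel_append hrest (List.Forall₂.cons ⟨v, hv'⟩ List.Forall₂.nil))
                hs
              refine ⟨fuel + 1, s', ?_, h2, ?_⟩
              · rw [sexec_pos_get, hs i]; exact h1
              · rw [h3]
                have e0 : Trun ι (PInstr.pos (.get (.inp i)) :: X) ρ true ↔ v = true :=
                  Trun_true_iff (f := f₀ + 1) hv
                have e1 : Trun ι (if ι i then X else X.drop 1) ρ true ↔ v = true :=
                  Trun_true_iff hv'
                exact or_congr Iff.rfl (by rw [ex_app1, ex_cons, e1, e0]; exact or_comm)
            · exact nc hv
            · exact nc hv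
          · exact nc hv
          · exact nc hv
          · -- pos reply p
            rw [trun_posreply] at hv
            cases hp : ρ p with
            | none => rw [hp] at hv; exact nc hv
            | some bb =>
              rw [hp] at hv
              obtain ⟨fuel, s', h1, h2, h3⟩ := ih (fs' ++ [f₀])
                (ts' ++ [(if bb then X else X.drop 1, ρ)]) s
                (by simp only [List.map_append, List.sum_append, List.map_cons,
                      List.sum_cons, List.map_nil, List.sum_nil]; omega)
                (List.rel_append hrest (List.Forall₂.cons ⟨v, hv⟩ List.Forall₂.nil))
                hs
              refine ⟨fuel + 1, s', ?_, h2, ?_⟩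
              · rw [sexec_pos_reply, hp]; exact h1
              · rw [h3]
                have e0 : Trun ι (PInstr.pos (.reply p) :: X) ρ true ↔ v = true :=
                  Trun_true_iff (f := f₀ + 1) (by rw [trun_posreply, hp]; exact hv)
                have e1 : Trun ι (if bb then X else X.drop 1) ρ true ↔ v = true :=
                  Trun_true_iff hv
                exact or_congr Iff.rfl (by rw [ex_app1, ex_cons, e1, e0]; exact or_comm)
        · -- neg
          rcases b with r | ⟨r, bb⟩ | p | p
          · rcases r with i | i | _
            · -- neg get inp i
              have hv' : trun f₀ ι (if ι i then X.drop 1 else X) ρ = some v := hv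
              obtain ⟨fuel, s', h1, h2, h3⟩ := ih (fs' ++ [f₀])
                (ts' ++ [(if ι i then X.drop 1 else X, ρ)]) s
                (by simp only [List.map_append, List.sum_append, List.map_cons,
                      List.sum_cons, List.map_nil, List.sum_nil]; omega)
                (List.rel_append hrest (List.Forall₂.cons ⟨v, hv'⟩ List.Forall₂.nil))
                hs
              refine ⟨fuel + 1, s', ?_, h2, ?_⟩
              · rw [sexec_neg_get, hs i]; exact h1
              · rw [h3]
                have e0 : Trun ι (PInstr.neg (.get (.inp i)) :: X) ρ true ↔ v = true :=
                  Trun_true_iff (f := f₀ + 1) hv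
                have e1 : Trun ι (if ι i then X.drop 1 else X) ρ true ↔ v = true :=
                  Trun_true_iff hv'
                exact or_congr Iff.rfl (by rw [ex_app1, ex_cons, e1, e0]; exact or_comm)
            · exact nc hv
            · exact nc hv
          · exact nc hv
          · exact nc hv
          · -- neg reply p
            rw [trun_negreply] at hv
            cases hp : ρ p with
            | none => rw [hp] at hv; exact nc hv
            | some bb =>
              rw [hp] at hv
              obtain ⟨fuel, s', h1, h2, h3⟩ := ih (fs' ++ [f₀])
                (ts' ++ [(if bb then X.drop 1 else X, ρ)]) s
                (by simp only [List.map_append, List.sum_append, List.map_cons,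
                      List.sum_cons, List.map_nil, List.sum_nil]; omega)
                (List.rel_append hrest (List.Forall₂.cons ⟨v, hv⟩ List.Forall₂.nil))
                hs
              refine ⟨fuel + 1, s', ?_, h2, ?_⟩
              · rw [sexec_neg_reply, hp]; exact h1
              · rw [h3]
                have e0 : Trun ι (PInstr.neg (.reply p) :: X) ρ true ↔ v = true :=
                  Trun_true_iff (f := f₀ + 1) (by rw [trun_negreply, hp]; exact hv)
                have e1 : Trun ι (if bb then X.drop 1 else X) ρ true ↔ v = true :=
                  Trun_true_iff hv
                exact or_congr Iff.rfl (by rw [ex_app1, ex_cons, e1, e0]; exact or_comm)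
        · -- jump l
          rcases l with _ | l
          · exact nc hv
          · have hv' : trun f₀ ι (X.drop l) ρ = some v := hv
            obtain ⟨fuel, s', h1, h2, h3⟩ := ih (f₀ :: fs') ((X.drop l, ρ) :: ts') s
              (by simp only [List.map_cons, List.sum_cons]; omega)
              (List.Forall₂.cons ⟨v, hv'⟩ hrest)
              hs
            refine ⟨fuel + 1, s', ?_, h2, ?_⟩
            · rw [sexec_jump]; exact h1
            · rw [h3]
              have e0 : Trun ι (PInstr.jump (l+1) :: X) ρ true ↔ v = true :=
                Trun_true_iff (f := f₀ + 1) hv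
              have e1 : Trun ι (X.drop l) ρ true ↔ v = true := Trun_true_iff hv'
              exact or_congr Iff.rfl (by rw [ex_cons, ex_cons, e1, e0])
        · -- halt
          obtain ⟨fuel, s', h1, h2, h3⟩ := ih fs' ts' s (by omega) hrest hs
          refine ⟨fuel + 1, s', ?_, h2, ?_⟩
          · rw [sexec_halt]; exact h1
          · rw [h3]
            have e0 : Trun ι (PInstr.halt :: X) ρ true ↔ v = true :=
              Trun_true_iff (f := f₀ + 1) hv
            have hvf : v = false := Option.some_inj.1 hv.symm
            exact or_congr Iff.rfl (by rw [ex_cons, e0]; simp [hvf])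

end Statement7

namespace Statement7

/-! ### Trun step lemmas -/

theorem Trun_halt {ι : ℕ → Bool} {X : List PInstr} {ρ : PEnv} :
    Trun ι (.halt :: X) ρ false := ⟨1, rfl⟩

theorem Trun_jump {ι : ℕ → Bool} {X : List PInstr} {ρ : PEnv} {l : ℕ} {v : Bool}
    (h : Trun ι (X.drop l) ρ v) : Trun ι (.jump (l+1) :: X) ρ v := by
  obtain ⟨f, hf⟩ := h; exact ⟨f+1, hf⟩

theorem Trun_neg_get {ι : ℕ → Bool} {X : List PInstr} {ρ : PEnv} {i : ℕ} {v : Bool}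
    (h : Trun ι (if ι i then X.drop 1 else X) ρ v) :
    Trun ι (.neg (.get (.inp i)) :: X) ρ v := by
  obtain ⟨f, hf⟩ := h; exact ⟨f+1, hf⟩

theorem Trun_set {ι : ℕ → Bool} {X : List PInstr} {ρ : PEnv} {v : Bool}
    (h : Trun ι X ρ v) : Trun ι (.plain (.set .out true) :: X) ρ true := by
  obtain ⟨f, hf⟩ := h
  refine ⟨f+1, ?_⟩
  show (trun f ι X ρ).map (fun _ => true) = some true
  rw [hf]; rfl

theorem Trun_pos_reply {ι : ℕ → Bool} {X : List PInstr} {ρ : PEnv} {p : ℕ} {b v : Bool}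
    (hp : ρ p = some b) (h : Trun ι (if b then X else X.drop 1) ρ v) :
    Trun ι (.pos (.reply p) :: X) ρ v := by
  obtain ⟨f, hf⟩ := h
  exact ⟨f+1, by rw [trun_posreply, hp]; exact hf⟩

theorem Trun_neg_reply {ι : ℕ → Bool} {X : List PInstr} {ρ : PEnv} {p : ℕ} {b v : Bool}
    (hp : ρ p = some b) (h : Trun ι (if b then X.drop 1 else X) ρ v) :
    Trun ι (.neg (.reply p) :: X) ρ v := by
  obtain ⟨f, hf⟩ := h
  exact ⟨f+1, by rw [trun_negreply, hp]; exact hf⟩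

theorem Trun_splitI {ι : ℕ → Bool} {X : List PInstr} {ρ : PEnv} {p : ℕ} {v1 v2 : Bool}
    (hp : ρ p = none)
    (h1 : Trun ι X (Function.update ρ p (some true)) v1)
    (h2 : Trun ι X (Function.update ρ p (some false)) v2) :
    Trun ι (.plain (.split p) :: X) ρ (v1 || v2) := by
  obtain ⟨f, hf⟩ := h1
  obtain ⟨g, hg⟩ := h2
  refine ⟨max f g + 1, ?_⟩
  rw [trun_split, hp, trun_mono_le (Nat.le_max_left f g) hf,
    trun_mono_le (Nat.le_max_right f g) hg]

/-! ### The program -/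

def litInstr (q : ℕ × Bool) : PInstr :=
  if q.2 then .pos (.reply q.1) else .neg (.reply q.1)

def block (i : ℕ) (l1 l2 l3 : ℕ × Bool) : List PInstr :=
  [.neg (.get (.inp i)), .jump 8,
   litInstr l1, .jump 6, litInstr l2, .jump 4, litInstr l3, .jump 2, .halt]

def pickL : List (ℕ × Bool) → (ℕ × Bool) × (ℕ × Bool) × (ℕ × Bool)
  | [] => ((1, true), (1, true), (1, true))
  | [a] => (a, a, a)
  | [a, b] => (a, b, a)
  | a :: b :: d :: _ => (a, b, d)

noncomputable def pick3 (c : Finset (ℕ × Bool)) : (ℕ × Bool) × (ℕ × Bool) × (ℕ × Bool) :=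
  pickL c.toList

noncomputable def bodyFrom (α : ℕ → Finset (ℕ × Bool)) : ℕ → ℕ → List PInstr
  | 0, _ => [.plain (.set .out true), .halt]
  | c+1, i =>
      block i (pick3 (α (i+1))).1 (pick3 (α (i+1))).2.1 (pick3 (α (i+1))).2.2 ++
        bodyFrom α c (i+1)

def splitsFrom : ℕ → ℕ → List PInstr → List PInstr
  | 0, _, B => B
  | c+1, j, B => .plain (.split j) :: splitsFrom c (j+1) B

/-! ### pick3 facts -/

theorem pick3_spec {k : ℕ} {c : Finset (ℕ × Bool)} (h : LitSetOK k c) :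
    (pick3 c).1 ∈ c ∧ (pick3 c).2.1 ∈ c ∧ (pick3 c).2.2 ∈ c ∧
      ∀ σ : ℕ → Bool,
        (((σ (pick3 c).1.1 == (pick3 c).1.2) || (σ (pick3 c).2.1.1 == (pick3 c).2.1.2))
            || (σ (pick3 c).2.2.1 == (pick3 c).2.2.2)) = true ↔
          ∃ q ∈ c, σ q.1 = q.2 := by
  obtain ⟨hne, hcard, _⟩ := h
  have hlen : c.toList.length = c.card := Finset.length_toList c
  have hmem : ∀ q : ℕ × Bool, q ∈ c.toList ↔ q ∈ c := fun q => Finset.mem_toList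
  have hlen3 : c.toList.length ≤ 3 := by rw [hlen]; exact hcard
  have hlen1 : 1 ≤ c.toList.length := by
    rw [hlen]; exact Finset.card_pos.mpr hne
  rcases hL : c.toList with _ | ⟨a, _ | ⟨b2, _ | ⟨d, rest⟩⟩⟩
  · rw [hL] at hlen1; simp at hlen1
  · have hp : pick3 c = (a, a, a) := by rw [pick3, hL]; rfl
    rw [hp]
    have ha : a ∈ c := (hmem a).mp (by rw [hL]; exact List.mem_singleton_self a)
    refine ⟨ha, ha, ha, fun σ => ?_⟩
    constructor
    · intro hb
      refine ⟨a, ha, ?_⟩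
      simp only [Bool.or_eq_true, beq_iff_eq] at hb
      tauto
    · rintro ⟨q, hq, hsq⟩
      have : q = a := by
        have := (hmem q).mpr hq; rw [hL] at this; simpa using this
      subst this
      simp [hsq]
  · have hp : pick3 c = (a, b2, a) := by rw [pick3, hL]; rfl
    rw [hp]
    have ha : a ∈ c := (hmem a).mp (by rw [hL]; simp)
    have hb2 : b2 ∈ c := (hmem b2).mp (by rw [hL]; simp)
    refine ⟨ha, hb2, ha, fun σ => ?_⟩
    constructor
    · intro hb
      simp only [Bool.or_eq_true, beq_iff_eq] at hb
      rcases hb with (hb | hb) | hb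
      exacts [⟨a, ha, hb⟩, ⟨b2, hb2, hb⟩, ⟨a, ha, hb⟩]
    · rintro ⟨q, hq, hsq⟩
      have : q = a ∨ q = b2 := by
        have := (hmem q).mpr hq; rw [hL] at this; simpa using this
      rcases this with rfl | rfl <;> simp [hsq]
  · have hrest : rest = [] := by
      rw [hL] at hlen3
      simp only [List.length_cons] at hlen3
      have : rest.length = 0 := by omega
      exact List.eq_nil_of_length_eq_zero this
    subst hrest
    have hp : pick3 c = (a, b2, d) := by rw [pick3, hL]; rfl
    rw [hp]
    have ha : a ∈ c := (hmem a).mp (by rw [hL]; simp)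
    have hb2 : b2 ∈ c := (hmem b2).mp (by rw [hL]; simp)
    have hd : d ∈ c := (hmem d).mp (by rw [hL]; simp)
    refine ⟨ha, hb2, hd, fun σ => ?_⟩
    constructor
    · intro hb
      simp only [Bool.or_eq_true, beq_iff_eq] at hb
      rcases hb with (hb | hb) | hb
      exacts [⟨a, ha, hb⟩, ⟨b2, hb2, hb⟩, ⟨d, hd, hb⟩]
    · rintro ⟨q, hq, hsq⟩
      have : q = a ∨ q = b2 ∨ q = d := by
        have := (hmem q).mpr hq; rw [hL] at this; simpa using this
      rcases this with rfl | rfl | rfl <;> simp [hsq]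

/-! ### litInstr step -/

theorem Trun_lit {ι σ : ℕ → Bool} {ρ : PEnv} {q : ℕ × Bool} {X : List PInstr} {v : Bool}
    (hq : ρ q.1 = some (σ q.1))
    (h : Trun ι (if σ q.1 == q.2 then X else X.drop 1) ρ v) :
    Trun ι (litInstr q :: X) ρ v := by
  unfold litInstr
  cases hq2 : q.2 with
  | true =>
    rw [if_pos rfl]
    refine Trun_pos_reply hq ?_
    cases hb : σ q.1 <;> rw [hb, hq2] at h <;> simpa using h
  | false =>
    rw [if_neg (by simp)]
    refine Trun_neg_reply hq ?_
    cases hb : σ q.1 <;> rw [hb, hq2] at h <;> simpa using h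

/-! ### block correctness -/

theorem block_ok {ι σ : ℕ → Bool} {ρ : PEnv} {i : ℕ} {l1 l2 l3 : ℕ × Bool}
    {rest : List PInstr} {v : Bool}
    (h1 : ρ l1.1 = some (σ l1.1)) (h2 : ρ l2.1 = some (σ l2.1))
    (h3 : ρ l3.1 = some (σ l3.1))
    (hrest : Trun ι rest ρ v) :
    Trun ι (block i l1 l2 l3 ++ rest) ρ
      (if ι i && !(((σ l1.1 == l1.2) || (σ l2.1 == l2.2)) || (σ l3.1 == l3.2))
        then false else v) := by
  show Trun ι
    (.neg (.get (.inp i)) :: .jump 8 :: litInstr l1 :: .jump 6 :: litInstr l2 :: .jump 4 ::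
      litInstr l3 :: .jump 2 :: .halt :: rest) ρ _
  apply Trun_neg_get
  cases hι : ι i with
  | false =>
    simp only [Bool.false_and, if_neg (by simp : ¬(false = true)), Bool.false_eq_true,
      if_false]
    exact Trun_jump (l := 7) (by exact hrest)
  | true =>
    simp only [if_pos rfl, Bool.true_and, List.drop_succ_cons, List.drop_zero]
    apply Trun_lit h1
    cases hs1 : (σ l1.1 == l1.2) with
    | true =>
      simp only [if_pos rfl, Bool.true_or, Bool.not_true, if_neg (by simp : ¬(false = true)),
        Bool.false_eq_true, if_false]
      exact Trun_jump (l := 5) (by exact hrest)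
    | false =>
      simp only [if_neg (by simp : ¬(false = true)), List.drop_succ_cons, List.drop_zero,
        Bool.false_or]
      apply Trun_lit h2
      cases hs2 : (σ l2.1 == l2.2) with
      | true =>
        simp only [if_pos rfl, Bool.true_or, Bool.or_true, Bool.not_true,
          if_neg (by simp : ¬(false = true)), Bool.false_eq_true, if_false]
        exact Trun_jump (l := 3) (by exact hrest)
      | false =>
        simp only [if_neg (by simp : ¬(false = true)), List.drop_succ_cons, List.drop_zero,
          Bool.false_or]
        apply Trun_lit h3
        cases hs3 : (σ l3.1 == l3.2) with
        | true =>
          simp only [if_pos rfl, Bool.or_true, Bool.not_true,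
            if_neg (by simp : ¬(false = true)), Bool.false_eq_true, if_false]
          exact Trun_jump (l := 1) (by exact hrest)
        | false =>
          simp only [if_neg (by simp : ¬(false = true)), List.drop_succ_cons, List.drop_zero,
            Bool.not_false, Bool.and_true, if_pos rfl]
          exact Trun_halt

end Statement7

namespace Statement7

section
attribute [local instance] Classical.propDecidable

theorem val_lemma {ι σ : ℕ → Bool} {α : ℕ → Finset (ℕ × Bool)} (i c : ℕ) (S : Bool)
    (hS : S = true ↔ ∃ q ∈ α (i+1), σ q.1 = q.2) :
    (if ι i && !S then false
      else decide (∀ i', i+1 ≤ i' → i' < (i+1) + c → ι i' = true →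
        ∃ q ∈ α (i'+1), σ q.1 = q.2)) =
    decide (∀ i', i ≤ i' → i' < i + (c+1) → ι i' = true →
        ∃ q ∈ α (i'+1), σ q.1 = q.2) := by
  cases hι : ι i with
  | false =>
    simp only [Bool.false_and, Bool.false_eq_true, if_false]
    apply decide_eq_decide.mpr
    constructor
    · intro h i' h1 h2 h3
      rcases Nat.lt_or_ge i i' with hlt | hge
      · exact h i' (by omega) (by omega) h3
      · have : i' = i := by omega
        subst this
        rw [hι] at h3; exact absurd h3 (by simp)
    · intro h i' h1 h2 h3
      exact h i' (by omega) (by omega) h3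
  | true =>
    cases hSb : S with
    | true =>
      rw [if_neg (by simp : ¬((true && !true) = true))]
      apply decide_eq_decide.mpr
      constructor
      · intro h i' h1 h2 h3
        rcases Nat.lt_or_ge i i' with hlt | hge
        · exact h i' (by omega) (by omega) h3
        · have : i' = i := by omega
          subst this
          exact hS.mp hSb
      · intro h i' h1 h2 h3
        exact h i' (by omega) (by omega) h3
    | false =>
      rw [if_pos (by simp : (true && !false) = true)]
      symm
      simp only [decide_eq_false_iff_not]
      intro h
      have := h i (le_refl i) (by omega) hι
      have := hS.mpr this
      rw [hSb] at this
      exact absurd this (by simp)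

theorem body_ok {ι σ : ℕ → Bool} {k : ℕ} {α : ℕ → Finset (ℕ × Bool)} {ρ : PEnv}
    (hρ : ∀ t, 1 ≤ t → t ≤ k → ρ t = some (σ t)) :
    ∀ (c i : ℕ), (∀ i', i ≤ i' → i' < i + c → LitSetOK k (α (i'+1))) →
    Trun ι (bodyFrom α c i) ρ
      (decide (∀ i', i ≤ i' → i' < i + c → ι i' = true →
        ∃ q ∈ α (i'+1), σ q.1 = q.2)) := by
  intro c
  induction c with
  | zero =>
    intro i _
    convert Trun_set (Trun_halt (ι := ι) (X := []) (ρ := ρ)) using 2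
    · rfl
    simp only [decide_eq_true_eq]
    intro i' h1 h2
    omega
  | succ c ih =>
    intro i hα
    have hok : LitSetOK k (α (i+1)) := hα i (le_refl i) (by omega)
    obtain ⟨m1, m2, m3, hsat⟩ := pick3_spec hok
    obtain ⟨_, _, hvars⟩ := hok
    have hv1 : ρ (pick3 (α (i+1))).1.1 = some (σ (pick3 (α (i+1))).1.1) :=
      hρ _ (hvars _ m1).1 (hvars _ m1).2
    have hv2 : ρ (pick3 (α (i+1))).2.1.1 = some (σ (pick3 (α (i+1))).2.1.1) :=
      hρ _ (hvars _ m2).1 (hvars _ m2).2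
    have hv3 : ρ (pick3 (α (i+1))).2.2.1 = some (σ (pick3 (α (i+1))).2.2.1) :=
      hρ _ (hvars _ m3).1 (hvars _ m3).2
    have hrest := ih (i+1) (fun i' h1 h2 => hα i' (by omega) (by omega))
    have hb := block_ok (ι := ι) (i := i) hv1 hv2 hv3 hrest
    rw [val_lemma (ι := ι) i c _ (hsat σ)] at hb
    exact hb

theorem splits_ok {ι : ℕ → Bool} {k m : ℕ} {α : ℕ → Finset (ℕ × Bool)}
    (hα : ∀ i', i' < m → LitSetOK k (α (i'+1))) :
    ∀ (c j : ℕ) (ρ : PEnv), j + c = k + 1 → 1 ≤ j →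
      (∀ t, j ≤ t → t ≤ k → ρ t = none) →
      (∀ t, 1 ≤ t → t < j → (ρ t).isSome = true) →
      Trun ι (splitsFrom c j (bodyFrom α m 0)) ρ
        (decide (∃ σ : ℕ → Bool, (∀ t, 1 ≤ t → t < j → ρ t = some (σ t)) ∧
          ∀ i', i' < m → ι i' = true → ∃ q ∈ α (i'+1), σ q.1 = q.2)) := by
  intro c
  induction c with
  | zero =>
    intro j ρ hjc hj1 _hnone hsome
    have hj : j = k + 1 := by omega
    subst hj
    have hρ : ∀ t, 1 ≤ t → t ≤ k → ρ t = some ((ρ t).getD false) := by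
      intro t h1 h2
      have hi := hsome t h1 (by omega)
      rcases ho : ρ t with _ | bval
      · rw [ho] at hi; simp at hi
      · simp
    have hb := body_ok (ι := ι) (σ := fun t => (ρ t).getD false) hρ m 0
      (fun i' _ h2 => hα i' (by omega))
    have hval : decide (∀ i', 0 ≤ i' → i' < 0 + m → ι i' = true →
          ∃ q ∈ α (i'+1), (fun t => (ρ t).getD false) q.1 = q.2)
        = decide (∃ σ : ℕ → Bool, (∀ t, 1 ≤ t → t < k + 1 → ρ t = some (σ t)) ∧
          ∀ i', i' < m → ι i' = true → ∃ q ∈ α (i'+1), σ q.1 = q.2) := by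
      apply decide_eq_decide.mpr
      constructor
      · intro h
        exact ⟨fun t => (ρ t).getD false, fun t h1 h2 => hρ t h1 (by omega),
          fun i' hi hc => h i' (by omega) (by omega) hc⟩
      · rintro ⟨σ, hagr, hR⟩
        intro i' _ h2 hc
        obtain ⟨q, hq, hsq⟩ := hR i' (by omega) hc
        refine ⟨q, hq, ?_⟩
        have hqv := (hα i' (by omega)).2.2 q hq
        have hrq := hagr q.1 hqv.1 (by omega)
        simp only [hrq, Option.getD_some]
        exact hsq
    rw [hval] at hb
    exact hb
  | succ c ih =>
    intro j ρ hjc hj1 hnone hsome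
    have hjk : j ≤ k := by omega
    have hpj : ρ j = none := hnone j (le_refl j) hjk
    have ht := ih (j+1) (Function.update ρ j (some true)) (by omega) (by omega)
      (fun t h1 h2 => by
        rw [Function.update_of_ne (by omega : t ≠ j)]; exact hnone t (by omega) h2)
      (fun t h1 h2 => by
        rcases Nat.lt_or_ge t j with h | h
        · rw [Function.update_of_ne (by omega)]; exact hsome t h1 h
        · have : t = j := by omega
          subst this; rw [Function.update_self]; rfl)
    have hf := ih (j+1) (Function.update ρ j (some false)) (by omega) (by omega)
      (fun t h1 h2 => by
        rw [Function.update_of_ne (by omega : t ≠ j)]; exact hnone t (by omega) h2)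
      (fun t h1 h2 => by
        rcases Nat.lt_or_ge t j with h | h
        · rw [Function.update_of_ne (by omega)]; exact hsome t h1 h
        · have : t = j := by omega
          subst this; rw [Function.update_self]; rfl)
    have hs := Trun_splitI hpj ht hf
    have hval : (decide (∃ σ : ℕ → Bool,
          (∀ t, 1 ≤ t → t < j+1 → Function.update ρ j (some true) t = some (σ t)) ∧
          ∀ i', i' < m → ι i' = true → ∃ q ∈ α (i'+1), σ q.1 = q.2) ||
        decide (∃ σ : ℕ → Bool,
          (∀ t, 1 ≤ t → t < j+1 → Function.update ρ j (some false) t = some (σ t)) ∧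
          ∀ i', i' < m → ι i' = true → ∃ q ∈ α (i'+1), σ q.1 = q.2))
        = decide (∃ σ : ℕ → Bool, (∀ t, 1 ≤ t → t < j → ρ t = some (σ t)) ∧
          ∀ i', i' < m → ι i' = true → ∃ q ∈ α (i'+1), σ q.1 = q.2) := by
      rw [← Bool.decide_or]
      apply decide_eq_decide.mpr
      constructor
      · rintro (⟨σ, hagr, hR⟩ | ⟨σ, hagr, hR⟩) <;>
          exact ⟨σ, fun t h1 h2 => by
            rw [← hagr t h1 (by omega), Function.update_of_ne (by omega)], hR⟩
      · rintro ⟨σ, hagr, hR⟩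
        cases hσj : σ j with
        | true =>
          left
          refine ⟨σ, fun t h1 h2 => ?_, hR⟩
          rcases Nat.lt_or_ge t j with h | h
          · rw [Function.update_of_ne (by omega)]; exact hagr t h1 h
          · have : t = j := by omega
            subst this; rw [Function.update_self, hσj]
        | false =>
          right
          refine ⟨σ, fun t h1 h2 => ?_, hR⟩
          rcases Nat.lt_or_ge t j with h | h
          · rw [Function.update_of_ne (by omega)]; exact hagr t h1 h
          · have : t = j := by omega
            subst this; rw [Function.update_self, hσj]
    rw [hval] at hs
    exact hs

end

/-! ### Syntactic facts about the program -/

theorem length_bodyFrom (α : ℕ → Finset (ℕ × Bool)) :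
    ∀ c i, (bodyFrom α c i).length = 9 * c + 2 := by
  intro c
  induction c with
  | zero => intro i; rfl
  | succ c ih =>
    intro i
    show (block _ _ _ _ ++ bodyFrom α c (i+1)).length = _
    rw [List.length_append, ih]
    show 9 + (9 * c + 2) = 9 * (c + 1) + 2
    ring

theorem length_splitsFrom :
    ∀ c j (B : List PInstr), (splitsFrom c j B).length = c + B.length := by
  intro c
  induction c with
  | zero => intro j B; show B.length = 0 + B.length; omega
  | succ c ih =>
    intro j B
    show (splitsFrom c (j+1) B).length + 1 = _
    rw [ih]; omega

theorem sis_lit (q : ℕ × Bool) : InstrBasicOK SisBasic (litInstr q) := by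
  unfold litInstr
  cases hq : q.2 <;> simp <;> trivial

theorem sis_bodyFrom (α : ℕ → Finset (ℕ × Bool)) :
    ∀ c i, ∀ u ∈ bodyFrom α c i, InstrBasicOK SisBasic u := by
  intro c
  induction c with
  | zero =>
    intro i u hu
    rcases List.mem_cons.mp hu with rfl | hu2
    · trivial
    rcases List.mem_cons.mp hu2 with rfl | hu3
    · trivial
    · exact absurd hu3 List.not_mem_nil
  | succ c ih =>
    intro i u hu
    rcases List.mem_append.mp hu with h | h
    · unfold block at h
      fin_cases h <;> first | exact sis_lit _ | trivial
    · exact ih (i+1) u h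

theorem sis_splitsFrom :
    ∀ c j (B : List PInstr), (∀ u ∈ B, InstrBasicOK SisBasic u) →
      ∀ u ∈ splitsFrom c j B, InstrBasicOK SisBasic u := by
  intro c
  induction c with
  | zero => intro j B hB; exact hB
  | succ c ih =>
    intro j B hB u hu
    rcases List.mem_cons.mp hu with rfl | h
    · trivial
    · exact ih (j+1) B hB u h

end Statement7

open Statement7 in
/-- Theorem 9 of the paper: 3SATC ∈ PLSIS. -/
theorem statement7 (A : AlphaFamily) : PLSIS (threeSATC A) := by
  classical
  refine ⟨Polynomial.C 2 + Polynomial.C 10 * Polynomial.X, fun n => ?_⟩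
  have hk_le : kOf n ≤ n := Nat.findGreatest_le n
  have hm_le : ndisj (kOf n) ≤ n := by
    have h0 : ndisj 0 ≤ n := by simp [ndisj]
    have h1 : ndisj (Nat.findGreatest (fun k => ndisj k ≤ n) n) ≤ n :=
      Nat.findGreatest_spec (P := fun k => ndisj k ≤ n) (Nat.zero_le n) h0
    exact h1
  refine ⟨splitsFrom (kOf n) 1 (bodyFrom (A.α (kOf n)) (ndisj (kOf n)) 0), ⟨?_, ?_⟩, ?_, ?_⟩
  · -- non-empty
    intro hnil
    have := length_splitsFrom (kOf n) 1 (bodyFrom (A.α (kOf n)) (ndisj (kOf n)) 0)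
    rw [hnil, length_bodyFrom] at this
    simp at this
  · exact sis_splitsFrom (kOf n) 1 _ (sis_bodyFrom (A.α (kOf n)) (ndisj (kOf n)) 0)
  · -- splitting computes
    intro b
    set ι : ℕ → Bool := fun i => if h : i < n then b ⟨i, h⟩ else false with hι
    have hα : ∀ i', i' < ndisj (kOf n) → LitSetOK (kOf n) (A.α (kOf n) (i'+1)) :=
      fun i' hi => A.maps (kOf n) (i'+1) (by omega) (by omega)
    have hTr := splits_ok (ι := ι) hα (kOf n) 1 (fun _ => none) (by omega) (le_refl 1)
      (fun t _ _ => rfl) (fun t h1 h2 => absurd h1 (by omega))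
    obtain ⟨f, hf⟩ := hTr
    obtain ⟨fuel, s', h1, _h2, h3⟩ := master ι (3^f) [f]
      [(splitsFrom (kOf n) 1 (bodyFrom (A.α (kOf n)) (ndisj (kOf n)) 0), fun _ => none)]
      (initState n b) (by simp)
      (List.Forall₂.cons ⟨_, hf⟩ List.Forall₂.nil)
      (fun i => by rw [hι]; exact rfl)
    refine ⟨fuel, s', h1, ?_⟩
    have hinit : initState n b Reg.out = false := rfl
    have h4 : s' Reg.out = true ↔
        Trun ι (splitsFrom (kOf n) 1 (bodyFrom (A.α (kOf n)) (ndisj (kOf n)) 0))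
          (fun _ => none) true := by
      rw [h3, hinit]; simp
    have h5 : Trun ι (splitsFrom (kOf n) 1 (bodyFrom (A.α (kOf n)) (ndisj (kOf n)) 0))
        (fun _ => none) true ↔
        (∃ σ : ℕ → Bool,
          (∀ t, 1 ≤ t → t < 1 → (fun _ => (none : Option Bool)) t = some (σ t)) ∧
          ∀ i', i' < ndisj (kOf n) → ι i' = true →
            ∃ q ∈ A.α (kOf n) (i'+1), σ q.1 = q.2) := by
      rw [Trun_true_iff hf]
      simp only [decide_eq_true_eq]
    have hDE : (∃ σ : ℕ → Bool,
          (∀ t, 1 ≤ t → t < 1 → (fun _ => (none : Option Bool)) t = some (σ t)) ∧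
          ∀ i', i' < ndisj (kOf n) → ι i' = true →
            ∃ q ∈ A.α (kOf n) (i'+1), σ q.1 = q.2) ↔
        (∃ σ : ℕ → Bool, ∀ i : Fin n, i.1 + 1 ≤ ndisj (kOf n) → b i = true →
          ∃ p ∈ A.α (kOf n) (i.1 + 1), σ p.1 = p.2) := by
      constructor
      · rintro ⟨σ, -, hR⟩
        refine ⟨σ, fun i him hbi => ?_⟩
        have hlt : i.1 < ndisj (kOf n) := by omega
        have hbι : ι i.1 = true := by
          show (if h : i.1 < n then b ⟨i.1, h⟩ else false) = true
          rw [dif_pos i.2]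
          simpa using hbi
        exact hR i.1 hlt hbι
      · rintro ⟨σ, hR⟩
        refine ⟨σ, fun t ht1 ht2 => absurd (by omega : ¬(1 ≤ t ∧ t < 1)) (by tauto), ?_⟩
        intro i' hi' hc
        have hi'n : i' < n := lt_of_lt_of_le hi' hm_le
        have hc2 : (if h : i' < n then b ⟨i', h⟩ else false) = true := hc
        rw [dif_pos hi'n] at hc2
        exact hR ⟨i', hi'n⟩ (by show i' + 1 ≤ ndisj (kOf n); omega) hc2
    have h6 : threeSATC A n b = true ↔
        (∃ σ : ℕ → Bool, ∀ i : Fin n, i.1 + 1 ≤ ndisj (kOf n) → b i = true →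
          ∃ p ∈ A.α (kOf n) (i.1 + 1), σ p.1 = p.2) := by
      simp only [threeSATC, decide_eq_true_eq]
    exact Bool.eq_iff_iff.mpr (h4.trans (h5.trans (hDE.trans h6.symm)))
  · -- length bound
    rw [length_splitsFrom, length_bodyFrom]
    simp only [Polynomial.eval_add, Polynomial.eval_mul, Polynomial.eval_C,
      Polynomial.eval_X]
    omega
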